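/- The family {x^ε}_{ε ∈ {0,1}^N} is a basis of 𝒜_D as an A-module; in particular, 𝒜_D is a free A-module of rank 2^N. -/

import Mathlib

open MvPolynomial

/-- The relation `Q_k = X_k² − d_{k,k}X_k − Σ_{l<k} d_{l,k}X_lX_k`. -/
noncomputable def Qrel {A : Type*} [CommRing A] {N : ℕ} (d : Fin N → Fin N → A)
    (k : Fin N) : MvPolynomial (Fin N) A :=
  X k ^ 2 - C (d k k) * X k
    - ∑ l ∈ Finset.univ.filter (fun l => l < k), C (d l k) * (X l * X k)

/-- The algebra `𝒜_D = A[X_1,…,X_N]/⟨Q_1,…,Q_N⟩`. -/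
abbrev AlgD {A : Type*} [CommRing A] {N : ℕ} (d : Fin N → Fin N → A) : Type _ :=
  MvPolynomial (Fin N) A ⧸ Ideal.span (Set.range (Qrel d))

/-- `x_i`, the image of `X_i` in `𝒜_D`. -/
noncomputable def xD {A : Type*} [CommRing A] {N : ℕ} (d : Fin N → Fin N → A)
    (i : Fin N) : AlgD d :=
  Ideal.Quotient.mk _ (X i)

/-- `x^ε = Π_{i : ε_i = 1} x_i` in `𝒜_D`. -/
noncomputable def xPowD {A : Type*} [CommRing A] {N : ℕ} (d : Fin N → Fin N → A)
    (ε : Fin N → Bool) : AlgD d :=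
  ∏ i ∈ Finset.univ.filter (fun i => ε i = true), xD d i

/-! ### Auxiliary material -/

section Aux
variable {A : Type*} [CommRing A] {n : ℕ}

/-- The iso splitting off the last variable. -/
noncomputable def lastEquiv (A : Type*) [CommRing A] (n : ℕ) :
    MvPolynomial (Fin (n+1)) A ≃ₐ[A] Polynomial (MvPolynomial (Fin n) A) :=
  (renameEquiv A (finSuccEquiv' (Fin.last n))).trans (optionEquivLeft A (Fin n))

lemma lastEquiv_X_last : lastEquiv A n (MvPolynomial.X (Fin.last n)) = Polynomial.X := by
  simp [lastEquiv, finSuccEquiv'_at]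

lemma lastEquiv_X_castSucc (j : Fin n) :
    lastEquiv A n (MvPolynomial.X j.castSucc) = Polynomial.C (MvPolynomial.X j) := by
  have : (finSuccEquiv' (Fin.last n)) j.castSucc = some j :=
    finSuccEquiv'_below (Fin.castSucc_lt_last j)
  simp [lastEquiv, this, optionEquivLeft_X_some]

lemma lastEquiv_C (a : A) :
    lastEquiv A n (MvPolynomial.C a) = Polynomial.C (MvPolynomial.C a) := by
  simp [lastEquiv, optionEquivLeft_C]

lemma filter_lt_last :
    (Finset.univ.filter (fun l : Fin (n+1) => l < Fin.last n)) =
      Finset.univ.map Fin.castSuccEmb := by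
  ext l
  simp only [Finset.mem_filter, Finset.mem_univ, true_and, Finset.mem_map]
  constructor
  · intro h
    exact ⟨⟨l, (Fin.lt_iff_val_lt_val.mp h)⟩, by simp [Fin.castSuccEmb, Fin.ext_iff]⟩
  · rintro ⟨m, -, rfl⟩
    exact Fin.castSucc_lt_last m

lemma filter_lt_castSucc (k : Fin n) :
    (Finset.univ.filter (fun l : Fin (n+1) => l < k.castSucc)) =
      (Finset.univ.filter (fun l : Fin n => l < k)).map Fin.castSuccEmb := by
  ext l
  simp only [Finset.mem_filter, Finset.mem_univ, true_and, Finset.mem_map]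
  constructor
  · intro h
    have hl : l.1 < n := lt_of_lt_of_le (Fin.lt_iff_val_lt_val.mp h)
      (Nat.le_of_lt_succ k.castSucc.2)
    have hlt : (⟨l.1, hl⟩ : Fin n) < k := by simpa [Fin.lt_def] using h
    exact ⟨⟨l, hl⟩, hlt, Fin.ext rfl⟩
  · rintro ⟨m, hm, rfl⟩
    exact Fin.castSucc_lt_castSucc_iff.mpr hm

lemma castSuccEmb_coe (x : Fin n) : Fin.castSuccEmb x = x.castSucc := rfl

variable (d : Fin (n+1) → Fin (n+1) → A)

/-- coefficient polynomial for the last relation -/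
noncomputable def cP : MvPolynomial (Fin n) A :=
  MvPolynomial.C (d (Fin.last n) (Fin.last n)) +
    ∑ l : Fin n, MvPolynomial.C (d l.castSucc (Fin.last n)) * MvPolynomial.X l

lemma lastEquiv_Qrel_last :
    lastEquiv A n (Qrel d (Fin.last n)) =
      Polynomial.X ^ 2 - Polynomial.C (cP d) * Polynomial.X := by
  simp only [Qrel, map_sub, map_pow, map_mul, map_sum, lastEquiv_X_last, lastEquiv_C,
    filter_lt_last, Finset.sum_map, castSuccEmb_coe, lastEquiv_X_castSucc, cP,
    map_add]
  rw [add_mul, Finset.sum_mul]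
  ring_nf

lemma lastEquiv_Qrel_castSucc (k : Fin n) :
    lastEquiv A n (Qrel d k.castSucc) =
      Polynomial.C (Qrel (fun i j => d i.castSucc j.castSucc) k) := by
  simp only [Qrel, map_sub, map_pow, map_mul, map_sum, lastEquiv_X_castSucc, lastEquiv_C,
    filter_lt_castSucc, Finset.sum_map, castSuccEmb_coe]

lemma map_ideal :
    Ideal.map (lastEquiv A n : MvPolynomial (Fin (n+1)) A →+* Polynomial (MvPolynomial (Fin n) A))
        (Ideal.span (Set.range (Qrel d))) =
      Ideal.map (Polynomial.C : MvPolynomial (Fin n) A →+* Polynomial (MvPolynomial (Fin n) A))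
          (Ideal.span (Set.range (Qrel (fun i j => d (Fin.castSucc i) (Fin.castSucc j))))) ⊔
        Ideal.span {Polynomial.X ^ 2 - Polynomial.C (cP d) * Polynomial.X} := by
  rw [Ideal.map_span, Ideal.map_span]
  have himg : (⇑((lastEquiv A n : MvPolynomial (Fin (n+1)) A ≃ₐ[A]
        Polynomial (MvPolynomial (Fin n) A)) :
        MvPolynomial (Fin (n+1)) A →+* Polynomial (MvPolynomial (Fin n) A))) ''
          Set.range (Qrel d) =
      insert (Polynomial.X ^ 2 - Polynomial.C (cP d) * Polynomial.X)
        ((⇑(Polynomial.C : MvPolynomial (Fin n) A →+* Polynomial (MvPolynomial (Fin n) A))) ''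
          Set.range (Qrel (fun i j => d (Fin.castSucc i) (Fin.castSucc j)))) := by
    ext y
    simp only [Set.mem_image, Set.mem_range, Set.mem_insert_iff]
    constructor
    · rintro ⟨p, ⟨k, rfl⟩, rfl⟩
      induction k using Fin.lastCases with
      | last => exact Or.inl (lastEquiv_Qrel_last d)
      | cast k => exact Or.inr ⟨_, ⟨k, rfl⟩, (lastEquiv_Qrel_castSucc d k).symm ▸ rfl⟩
    · rintro (rfl | ⟨p, ⟨k, rfl⟩, rfl⟩)
      · exact ⟨Qrel d (Fin.last n), ⟨_, rfl⟩, lastEquiv_Qrel_last d⟩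
      · exact ⟨Qrel d k.castSucc, ⟨_, rfl⟩, lastEquiv_Qrel_castSucc d k⟩
  rw [himg, Ideal.span_insert, sup_comm]

end Aux

section DQ
variable {A : Type*} [CommRing A] {S : Type*} [CommRing S] [Algebra A S] (I J : Ideal S)

noncomputable def dqEquiv : (S ⧸ (I ⊔ J)) ≃ₐ[A] ((S ⧸ I) ⧸ J.map (Ideal.Quotient.mk I)) :=
  AlgEquiv.ofRingEquiv (f := (DoubleQuot.quotQuotEquivQuotSup I J).symm) (by
    intro a
    have h1 : algebraMap A (S ⧸ (I ⊔ J)) a = Ideal.Quotient.mk _ (algebraMap A S a) := rfl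
    rw [h1, DoubleQuot.quotQuotEquivQuotSup_symm_quotQuotMk]
    rfl)

lemma dqEquiv_mk (x : S) :
    dqEquiv (A := A) I J (Ideal.Quotient.mk _ x) =
      Ideal.Quotient.mk _ (Ideal.Quotient.mk I x) := by
  show (DoubleQuot.quotQuotEquivQuotSup I J).symm (Ideal.Quotient.mk _ x) = _
  rw [DoubleQuot.quotQuotEquivQuotSup_symm_quotQuotMk]
  rfl

end DQ

section Chi
variable {A : Type*} [CommRing A] {n : ℕ} (J : Ideal (MvPolynomial (Fin n) A))

/-- algebra version of `polynomialQuotientEquivQuotientPolynomial` -/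
noncomputable def chiEquiv :
    Polynomial (MvPolynomial (Fin n) A ⧸ J) ≃ₐ[A]
      (Polynomial (MvPolynomial (Fin n) A) ⧸ Ideal.map (Polynomial.C) J) :=
  AlgEquiv.ofRingEquiv (f := Ideal.polynomialQuotientEquivQuotientPolynomial J) (by
    intro a
    have h1 : (algebraMap A (Polynomial (MvPolynomial (Fin n) A ⧸ J)) a) =
        (Polynomial.C (MvPolynomial.C a)).map (Ideal.Quotient.mk J) := by
      rw [Polynomial.map_C]
      rfl
    rw [h1, Ideal.polynomialQuotientEquivQuotientPolynomial_map_mk]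
    rfl)

lemma chiEquiv_symm_mk (p : Polynomial (MvPolynomial (Fin n) A)) :
    (chiEquiv J).symm (Ideal.Quotient.mk _ p) = p.map (Ideal.Quotient.mk J) := by
  show (Ideal.polynomialQuotientEquivQuotientPolynomial J).symm (Ideal.Quotient.mk _ p) = _
  rw [Ideal.polynomialQuotientEquivQuotientPolynomial_symm_mk]

end Chi

section QEA
variable {A : Type*} [CommRing A]

lemma quotientEquivAlg_mk' {S T : Type*} [CommRing S] [CommRing T] [Algebra A S] [Algebra A T]
    (I : Ideal S) (J : Ideal T) (f : S ≃ₐ[A] T) (hIJ : J = I.map (f : S →+* T)) (x : S) :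
    Ideal.quotientEquivAlg I J f hIJ (Ideal.Quotient.mk I x) = Ideal.Quotient.mk J (f x) :=
  Ideal.quotientEquiv_mk I J (f : S ≃+* T) hIJ x

end QEA

section Step
variable {A : Type*} [CommRing A] {n : ℕ} (d : Fin (n+1) → Fin (n+1) → A)

/-- The image of `cP d` in `AlgD d'`. -/
noncomputable def cbD : AlgD (fun i j => d (Fin.castSucc i) (Fin.castSucc j)) :=
  Ideal.Quotient.mk _ (cP d)

/-- The quadratic polynomial over `AlgD d'` whose adjoin-root gives `AlgD d`. -/
noncomputable def fD : Polynomial (AlgD (fun i j => d (Fin.castSucc i) (Fin.castSucc j))) :=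
  Polynomial.X ^ 2 - Polynomial.C (cbD d) * Polynomial.X

lemma degree_CX_le : (Polynomial.C (cbD d) * Polynomial.X).degree ≤ 1 := by
  refine le_trans (Polynomial.degree_mul_le _ _) ?_
  have h1 := Polynomial.degree_C_le (a := cbD d)
  have h2 := Polynomial.degree_X_le
    (R := AlgD (fun i j => d (Fin.castSucc i) (Fin.castSucc j)))
  calc (Polynomial.C (cbD d)).degree + Polynomial.X.degree ≤ 0 + 1 := add_le_add h1 h2
    _ = 1 := by norm_num

lemma degree_CX_lt : (Polynomial.C (cbD d) * Polynomial.X).degree < 2 :=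
  lt_of_le_of_lt (degree_CX_le d) (by decide)

lemma fD_monic : (fD d).Monic := Polynomial.monic_X_pow_sub (degree_CX_lt d)

lemma fD_natDegree [Nontrivial (AlgD (fun i j => d (Fin.castSucc i) (Fin.castSucc j)))] :
    (fD d).natDegree = 2 := by
  have h : (Polynomial.C (cbD d) * Polynomial.X).degree <
      (Polynomial.X ^ 2 :
        Polynomial (AlgD (fun i j => d (Fin.castSucc i) (Fin.castSucc j)))).degree := by
    rw [Polynomial.degree_X_pow]
    exact degree_CX_lt d
  have hdeg : (fD d).degree = 2 := by
    rw [fD, Polynomial.degree_sub_eq_left_of_degree_lt h, Polynomial.degree_X_pow]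
    rfl
  exact Polynomial.natDegree_eq_of_degree_eq_some hdeg

lemma map_gP_eq_fD :
    (Polynomial.X ^ 2 - Polynomial.C (cP d) * Polynomial.X).map
        (Ideal.Quotient.mk (Ideal.span (Set.range
          (Qrel (fun i j => d (Fin.castSucc i) (Fin.castSucc j)))))) = fD d := by
  simp [fD, cbD, Polynomial.map_sub, Polynomial.map_pow, Polynomial.map_mul,
    Polynomial.map_C, Polynomial.map_X]

/-- The step equivalence: `AlgD d ≃ₐ[A] AdjoinRoot (fD d)`. -/
noncomputable def stepEquiv : AlgD d ≃ₐ[A] AdjoinRoot (fD d) :=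
  (Ideal.quotientEquivAlg _ _ (lastEquiv A n) rfl).trans <|
  (Ideal.quotientEquivAlgOfEq A (map_ideal d)).trans <|
  (dqEquiv _ _).trans <|
  Ideal.quotientEquivAlg _ _
    (chiEquiv (Ideal.span (Set.range (Qrel (fun i j => d (Fin.castSucc i) (Fin.castSucc j)))))).symm
    (by
      simp only [Ideal.map_span, Set.image_singleton]
      congr 1
      refine congrArg _ ((chiEquiv_symm_mk _ _).trans (map_gP_eq_fD d)).symm)

lemma stepEquiv_mk (p : MvPolynomial (Fin (n+1)) A) :
    stepEquiv d (Ideal.Quotient.mk _ p) =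
      AdjoinRoot.mk (fD d) ((lastEquiv A n p).map (Ideal.Quotient.mk
        (Ideal.span (Set.range (Qrel (fun i j => d (Fin.castSucc i) (Fin.castSucc j))))))) := by
  simp only [stepEquiv, AlgEquiv.trans_apply, quotientEquivAlg_mk',
    Ideal.quotientEquivAlgOfEq_mk, dqEquiv_mk, chiEquiv_symm_mk]
  rfl

end Step

lemma smul_adjoinRoot {B : Type*} [CommRing B] {f : Polynomial B} (b : B) (z : AdjoinRoot f) :
    b • z = algebraMap B (AdjoinRoot f) b * z := by
  obtain ⟨p, rfl⟩ := AdjoinRoot.mk_surjective (g := f) z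
  rw [AdjoinRoot.smul_mk, Polynomial.smul_eq_C_mul, map_mul]
  rfl

/-- Splitting a boolean tuple into its first `n` coordinates and its last one. -/
def boolSplit (n : ℕ) : (Fin (n+1) → Bool) ≃ ((Fin n → Bool) × Fin 2) where
  toFun ε := (fun j => ε j.castSucc, if ε (Fin.last n) then 1 else 0)
  invFun p := Fin.lastCases (decide (p.2 = 1)) p.1
  left_inv ε := by
    funext j
    induction j using Fin.lastCases with
    | last => cases h : ε (Fin.last n) <;> simp [h]
    | cast j => simp
  right_inv p := by
    obtain ⟨ε', i⟩ := p
    refine Prod.ext (funext fun j => ?_) ?_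
    · simp
    · show (if (Fin.lastCases (n := n) (motive := fun _ => Bool)
        (decide (i = 1)) ε' (Fin.last n)) = true then (1 : Fin 2) else 0) = i
      rw [Fin.lastCases_last]
      fin_cases i <;> simp

set_option maxHeartbeats 1000000 in
set_option synthInstance.maxHeartbeats 200000 in
theorem xPowD_basis_aux {A : Type*} [CommRing A] [Nontrivial A] :
    ∀ (N : ℕ) (d : Fin N → Fin N → A),
      ∃ b : Module.Basis (Fin N → Bool) A (AlgD d), ∀ ε, b ε = xPowD d ε := by
  intro N
  induction N with
  | zero =>
    intro d
    have hspan : Ideal.span (Set.range (Qrel d)) = (⊥ : Ideal (MvPolynomial (Fin 0) A)) := by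
      rw [Set.range_eq_empty, Ideal.span_empty]
    have hinj : Function.Injective
        (Ideal.Quotient.mkₐ A (⊥ : Ideal (MvPolynomial (Fin 0) A))) := by
      intro x y h
      have hx : Ideal.Quotient.mk (⊥ : Ideal (MvPolynomial (Fin 0) A)) x =
          Ideal.Quotient.mk _ y := h
      have := Ideal.Quotient.eq.mp hx
      simpa [sub_eq_zero] using Ideal.mem_bot.mp this
    let e0 : AlgD d ≃ₐ[A] A :=
      ((Ideal.quotientEquivAlgOfEq A hspan).trans
        (AlgEquiv.ofBijective (Ideal.Quotient.mkₐ A (⊥ : Ideal (MvPolynomial (Fin 0) A)))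
          ⟨hinj, Ideal.Quotient.mk_surjective⟩).symm).trans (isEmptyAlgEquiv A (Fin 0))
    refine ⟨(Module.Basis.singleton (Fin 0 → Bool) A).map e0.symm.toLinearEquiv, fun ε => ?_⟩
    have h1 : xPowD d ε = 1 := by
      rw [xPowD]
      simp
    rw [Module.Basis.map_apply, Module.Basis.singleton_apply, h1]
    exact map_one e0.symm
  | succ n IH =>
    intro d
    obtain ⟨bB, hbB⟩ := IH (fun i j => d (Fin.castSucc i) (Fin.castSucc j))
    haveI : Nontrivial (AlgD (fun i j => d (Fin.castSucc i) (Fin.castSucc j))) := by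
      refine nontrivial_of_ne (bB (fun _ => false)) 0 (bB.ne_zero _)
    -- power basis for the adjoined root
    let pb := AdjoinRoot.powerBasis' (fD_monic d)
    let big : Module.Basis ((Fin n → Bool) × Fin pb.dim) A (AdjoinRoot (fD d)) :=
      bB.smulTower pb.basis
    have hdim : pb.dim = 2 := fD_natDegree d
    let ι2 : ((Fin n → Bool) × Fin 2) ≃ ((Fin n → Bool) × Fin pb.dim) :=
      Equiv.prodCongr (Equiv.refl _) (finCongr hdim.symm)
    let e : ((Fin n → Bool) × Fin pb.dim) ≃ (Fin (n+1) → Bool) :=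
      ι2.symm.trans (boolSplit n).symm
    -- key computation
    have hroot : stepEquiv d (xD d (Fin.last n)) = AdjoinRoot.root (fD d) := by
      rw [xD, stepEquiv_mk, lastEquiv_X_last, Polynomial.map_X]
      rfl
    have hcast : ∀ j : Fin n, stepEquiv d (xD d j.castSucc) =
        algebraMap _ (AdjoinRoot (fD d))
          (xD (fun i j => d (Fin.castSucc i) (Fin.castSucc j)) j) := by
      intro j
      rw [xD, stepEquiv_mk, lastEquiv_X_castSucc, Polynomial.map_C]
      rfl
    have key : ∀ ε : Fin (n+1) → Bool, stepEquiv d (xPowD d ε) =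
        algebraMap _ (AdjoinRoot (fD d))
            (xPowD (fun i j => d (Fin.castSucc i) (Fin.castSucc j)) (fun j => ε j.castSucc)) *
          (if ε (Fin.last n) then AdjoinRoot.root (fD d) else 1) := by
      intro ε
      rw [xPowD, map_prod, Finset.prod_filter, Fin.prod_univ_castSucc]
      have hterm : ∀ j : Fin n,
          (if ε j.castSucc = true then stepEquiv d (xD d j.castSucc) else 1) =
            algebraMap _ (AdjoinRoot (fD d))
              (if ε j.castSucc = true
                then xD (fun i j => d (Fin.castSucc i) (Fin.castSucc j)) j else 1) := by
        intro j
        by_cases h : ε j.castSucc = true <;> simp [h, hcast]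
      rw [Finset.prod_congr rfl (fun j _ => hterm j), ← map_prod, ← Finset.prod_filter, ← xPowD]
      congr 1
      by_cases h : ε (Fin.last n) = true <;> simp [h, hroot]
    refine ⟨(big.map (stepEquiv d).symm.toLinearEquiv).reindex e, fun ε => ?_⟩
    rw [Module.Basis.reindex_apply, Module.Basis.map_apply]
    have hsymm : e.symm ε = ι2 (boolSplit n ε) := rfl
    rw [hsymm]
    have hbig : big (ι2 (boolSplit n ε)) = stepEquiv d (xPowD d ε) := by
      rw [key ε]
      have h1 : big (ι2 (boolSplit n ε)) =
          bB (fun j => ε j.castSucc) • pb.basis (finCongr hdim.symm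
            (if ε (Fin.last n) then 1 else 0)) := by
        rw [Module.Basis.smulTower_apply]
        rfl
      rw [h1, pb.basis_eq_pow, smul_adjoinRoot, hbB]
      congr 1
      show AdjoinRoot.root (fD d) ^
          ((finCongr hdim.symm (if ε (Fin.last n) then 1 else 0) : Fin pb.dim) : ℕ) = _
      by_cases h : ε (Fin.last n) = true <;> simp [h]
    rw [hbig]
    exact (stepEquiv d).symm_apply_apply _

/-- The family `{x^ε}_{ε ∈ {0,1}^N}` is a basis of `𝒜_D` as an `A`-module; in
particular `𝒜_D` is a free `A`-module of rank `2^N`. -/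
theorem xPowD_isBasis {A : Type*} [CommRing A] {N : ℕ} (hN : 1 ≤ N)
    (d : Fin N → Fin N → A) :
    ∃ b : Module.Basis (Fin N → Bool) A (AlgD d), ∀ ε, b ε = xPowD d ε := by
  rcases subsingleton_or_nontrivial A with hA | hA
  · -- trivial ring: everything is a basis
    haveI : Subsingleton (AlgD d) := Module.subsingleton A _
    let r : AlgD d ≃ₗ[A] ((Fin N → Bool) →₀ A) :=
      { toFun := fun _ => 0
        map_add' := fun _ _ => Subsingleton.elim _ _
        map_smul' := fun _ _ => Subsingleton.elim _ _
        invFun := fun _ => 0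
        left_inv := fun x => Subsingleton.elim _ _
        right_inv := fun x => Subsingleton.elim _ _ }
    exact ⟨Module.Basis.ofRepr r, fun ε => Subsingleton.elim _ _⟩
  · exact xPowD_basis_aux N d
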